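/- arXiv:1210.0463 — 2 statements merged into one kernel-verified Lean document; each statement's English description precedes it below -/
import Mathlib

section
/- For any two orthogonal projections P and Q and any density matrix σ on ℂ^d, one has |tr(P Q σ)| ≥ tr(P σ) − √(tr((1 − Q) σ)), where 1 denotes the identity matrix. -/
open scoped ComplexOrder
open Matrix
open scoped MatrixOrder

noncomputable def toE {d : ℕ} (X : Matrix (Fin d) (Fin d) ℂ) :
    EuclideanSpace ℂ (Fin d × Fin d) :=
  WithLp.toLp 2 (fun p : Fin d × Fin d => X p.1 p.2)

lemma inner_toE {d : ℕ} (X Y : Matrix (Fin d) (Fin d) ℂ) :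
    (inner ℂ (toE X) (toE Y) : ℂ) = (Xᴴ * Y).trace := by
  simp only [PiLp.inner_apply, RCLike.inner_apply, toE, Matrix.trace, Matrix.diag,
    Matrix.mul_apply, Matrix.conjTranspose_apply, Fintype.sum_prod_type, starRingEnd_apply,
    PiLp.toLp_apply]
  rw [Finset.sum_comm]
  exact Finset.sum_congr rfl fun _ _ => Finset.sum_congr rfl fun _ _ => mul_comm _ _

/-- For orthogonal projections `P`, `Q` and a density matrix `σ` on `ℂ^d`:
`|tr(P Q σ)| ≥ tr(P σ) − √(tr((1 − Q) σ))`. -/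
theorem abs_trace_proj_proj_ge (d : ℕ) (P Q σ : Matrix (Fin d) (Fin d) ℂ)
    (hP : P.IsHermitian) (hP2 : P * P = P)
    (hQ : Q.IsHermitian) (hQ2 : Q * Q = Q)
    (hσ : σ.PosSemidef) (htr : σ.trace = 1) :
    ‖(P * Q * σ).trace‖ ≥ ((P * σ).trace).re - Real.sqrt (((1 - Q) * σ).trace).re := by
  classical
  set A := CFC.sqrt σ with hAdef
  have hAH : Aᴴ = A := (CFC.sqrt_nonneg σ).posSemidef.1
  have hAA : A * A = σ := CFC.sqrt_mul_sqrt_self σ hσ.nonneg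
  set R : Matrix (Fin d) (Fin d) ℂ := 1 - Q with hRdef
  have hRH : Rᴴ = R := by
    simp [hRdef, Matrix.conjTranspose_sub, hQ.eq]
  have hR2 : R * R = R := by
    simp [hRdef, Matrix.sub_mul, Matrix.mul_sub, hQ2]
  set S : Matrix (Fin d) (Fin d) ℂ := 1 - P with hSdef
  have hSH : Sᴴ = S := by
    simp [hSdef, Matrix.conjTranspose_sub, hP.eq]
  have hS2 : S * S = S := by
    simp [hSdef, Matrix.sub_mul, Matrix.mul_sub, hP2]
  -- key inner product identity
  have key : ∀ M N : Matrix (Fin d) (Fin d) ℂ, Mᴴ = M →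
      (inner ℂ (toE (M * A)) (toE (N * A)) : ℂ) = (M * N * σ).trace := by
    intro M N hM
    rw [inner_toE]
    have h1 : (M * A)ᴴ * (N * A) = A * (M * N * A) := by
      rw [Matrix.conjTranspose_mul, hAH, hM]
      simp [Matrix.mul_assoc]
    rw [h1, Matrix.trace_mul_comm, Matrix.mul_assoc, hAA]
  have keyself : ∀ M : Matrix (Fin d) (Fin d) ℂ, Mᴴ = M → M * M = M →
      (inner ℂ (toE (M * A)) (toE (M * A)) : ℂ) = (M * σ).trace := by
    intro M hM hM2
    rw [key M M hM, hM2]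
  -- norms
  have normsq : ∀ M : Matrix (Fin d) (Fin d) ℂ, Mᴴ = M → M * M = M →
      ‖toE (M * A)‖ ^ 2 = ((M * σ).trace).re := by
    intro M hM hM2
    rw [← @inner_self_eq_norm_sq ℂ, keyself M hM hM2]
    simp
  -- trace of Pσ plus trace of Sσ equals 1
  have hsum : ((P * σ).trace).re + ((S * σ).trace).re = 1 := by
    have : P * σ + S * σ = σ := by simp [hSdef, Matrix.sub_mul]
    have h := congrArg (fun X => (Matrix.trace X).re) this
    simpa [Matrix.trace_add, Complex.add_re, htr] using h
  have hPnormsq := normsq P hP.eq hP2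
  have hSnormsq := normsq S hSH hS2
  have hRnormsq := normsq R hRH hR2
  have hPnorm_le : ‖toE (P * A)‖ ≤ 1 := by
    nlinarith [norm_nonneg (toE (P * A)), norm_nonneg (toE (S * A)), sq_nonneg (‖toE (S * A)‖)]
  have hRnorm : ‖toE (R * A)‖ = Real.sqrt (((1 - Q) * σ).trace).re := by
    rw [← hRdef, ← hRnormsq, Real.sqrt_sq (norm_nonneg _)]
  -- Cauchy–Schwarz
  have hCS : ‖(P * R * σ).trace‖ ≤ ‖toE (P * A)‖ * ‖toE (R * A)‖ := by
    rw [← key P R hP.eq]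
    exact norm_inner_le_norm _ _
  have hCS' : ‖(P * R * σ).trace‖ ≤ Real.sqrt (((1 - Q) * σ).trace).re := by
    calc ‖(P * R * σ).trace‖ ≤ ‖toE (P * A)‖ * ‖toE (R * A)‖ := hCS
      _ ≤ 1 * ‖toE (R * A)‖ := by
          apply mul_le_mul_of_nonneg_right hPnorm_le (norm_nonneg _)
      _ = Real.sqrt (((1 - Q) * σ).trace).re := by rw [one_mul, hRnorm]
  -- decomposition of the trace
  have hdec : (P * Q * σ).trace = (P * σ).trace - (P * R * σ).trace := by
    have : P * R * σ = P * σ - P * Q * σ := by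
      simp [hRdef, Matrix.mul_sub, Matrix.sub_mul]
    rw [this, Matrix.trace_sub]
    ring
  have hre : ((P * Q * σ).trace).re = ((P * σ).trace).re - ((P * R * σ).trace).re := by
    rw [hdec, Complex.sub_re]
  have h1 : ((P * Q * σ).trace).re ≤ ‖(P * Q * σ).trace‖ := Complex.re_le_norm _
  have h2 : ((P * R * σ).trace).re ≤ ‖(P * R * σ).trace‖ := Complex.re_le_norm _
  linarith
end

section
/- Let P and Q be orthogonal projections and σ a density matrix on ℂ^d, and let 0 ≤ ε ≤ 1. If tr(P σ) ≥ 1 − ε and tr(Q σ) ≥ 1 − ε, then |tr(P Q σ)| ≥ 1 − 2√ε. -/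
open scoped ComplexOrder Matrix MatrixOrder

lemma trace_cauchy (d : ℕ) (A B : Matrix (Fin d) (Fin d) ℂ) :
    ‖(Aᴴ * B).trace‖ ≤
      Real.sqrt ((Aᴴ * A).trace.re) * Real.sqrt ((Bᴴ * B).trace.re) := by
  let v : Matrix (Fin d) (Fin d) ℂ → EuclideanSpace ℂ (Fin d × Fin d) :=
    fun M => (WithLp.equiv 2 _).symm (fun p => M p.1 p.2)
  have key : ∀ (M N : Matrix (Fin d) (Fin d) ℂ),
      (Mᴴ * N).trace = inner (𝕜 := ℂ) (v M) (v N) := by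
    intro M N
    simp only [Matrix.trace, Matrix.diag, Matrix.mul_apply, Matrix.conjTranspose_apply,
      PiLp.inner_apply, RCLike.inner_apply, Fintype.sum_prod_type, v, WithLp.equiv_symm_apply, PiLp.toLp_apply]
    rw [Finset.sum_comm]
    simp [mul_comm]
  have hx : (Aᴴ * A).trace.re = ‖v A‖ ^ 2 := by
    rw [key A A, ← @inner_self_eq_norm_sq ℂ]; rfl
  have hy : (Bᴴ * B).trace.re = ‖v B‖ ^ 2 := by
    rw [key B B, ← @inner_self_eq_norm_sq ℂ]; rfl
  rw [key A B, hx, hy, Real.sqrt_sq (norm_nonneg _), Real.sqrt_sq (norm_nonneg _)]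
  exact norm_inner_le_norm (𝕜 := ℂ) (v A) (v B)

lemma psd_trace_re_nonneg {d : ℕ} {M : Matrix (Fin d) (Fin d) ℂ} (h : M.PosSemidef) :
    0 ≤ M.trace.re := by
  have hd : ∀ i, 0 ≤ (M i i).re := by
    intro i
    have h2 := h.diag_nonneg (i := i)
    have := Complex.le_def.mp h2
    simpa using this.1
  have : M.trace.re = ∑ i, (M i i).re := by
    simp [Matrix.trace, Matrix.diag, Complex.re_sum]
  rw [this]
  exact Finset.sum_nonneg fun i _ => hd i

/-- If `tr(P σ) ≥ 1 − ε` and `tr(Q σ) ≥ 1 − ε` for orthogonal projections `P`, `Q` and a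
density matrix `σ` on `ℂ^d`, then `|tr(P Q σ)| ≥ 1 − 2√ε`. -/
theorem abs_trace_proj_proj_ge_of_trace_ge (d : ℕ) (P Q σ : Matrix (Fin d) (Fin d) ℂ)
    (hP : P.IsHermitian) (hP2 : P * P = P)
    (hQ : Q.IsHermitian) (hQ2 : Q * Q = Q)
    (hσ : σ.PosSemidef) (htr : σ.trace = 1)
    (ε : ℝ) (hε0 : 0 ≤ ε) (hε1 : ε ≤ 1)
    (hPσ : ((P * σ).trace).re ≥ 1 - ε) (hQσ : ((Q * σ).trace).re ≥ 1 - ε) :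
    ‖(P * Q * σ).trace‖ ≥ 1 - 2 * Real.sqrt ε := by
  set S := CFC.sqrt σ with hSdef
  have hSS : S * S = σ := CFC.sqrt_mul_sqrt_self σ hσ.nonneg
  have hSH : S.IsHermitian := (Matrix.nonneg_iff_posSemidef.mp (CFC.sqrt_nonneg σ)).1
  set R := (1 : Matrix (Fin d) (Fin d) ℂ) - P with hRdef
  have hRH : R.IsHermitian := (Matrix.isHermitian_one).sub hP
  have hR2 : R * R = R := by
    simp [hRdef, Matrix.mul_sub, Matrix.sub_mul, hP2]
  -- decomposition
  have hdec : (P * Q * σ).trace = (Q * σ).trace - (R * Q * σ).trace := by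
    have h : R * Q * σ = Q * σ - P * Q * σ := by simp [hRdef, Matrix.sub_mul]
    rw [h, Matrix.trace_sub]; ring
  -- trace identities
  have cyc : ∀ (M : Matrix (Fin d) (Fin d) ℂ), (S * M * S).trace = (M * σ).trace := by
    intro M
    rw [Matrix.trace_mul_cycle, hSS, Matrix.trace_mul_comm]
  -- Cauchy-Schwarz bound on (R * Q * σ).trace
  have key4 : ∀ M N : Matrix (Fin d) (Fin d) ℂ,
      ((M * S)ᴴ * (N * S)).trace = (Mᴴ * N * σ).trace := by
    intro M N
    rw [Matrix.conjTranspose_mul, hSH.eq,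
      show S * Mᴴ * (N * S) = S * (Mᴴ * N) * S from by noncomm_ring, cyc]
  have hA : ((R * S)ᴴ * (R * S)).trace = (R * σ).trace := by
    rw [key4, hRH.eq, hR2]
  have hB : ((Q * S)ᴴ * (Q * S)).trace = (Q * σ).trace := by
    rw [key4, hQ.eq, hQ2]
  have hAB : ((R * S)ᴴ * (Q * S)).trace = (R * Q * σ).trace := by
    rw [key4, hRH.eq]
  have hcs := trace_cauchy d (R * S) (Q * S)
  rw [hA, hB, hAB] at hcs
  -- (R * σ).trace.re ≤ ε
  have hRσ : (R * σ).trace.re ≤ ε := by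
    have : (R * σ).trace = σ.trace - (P * σ).trace := by
      rw [hRdef, Matrix.sub_mul, Matrix.trace_sub, Matrix.one_mul]
    rw [this, htr]
    simp only [Complex.sub_re, Complex.one_re]
    linarith
  have hRσ0 : 0 ≤ (R * σ).trace.re := by
    have hRpsd : R.PosSemidef := by
      have := Matrix.posSemidef_conjTranspose_mul_self R
      rwa [hRH.eq, hR2] at this
    have := (hRpsd.conjTranspose_mul_mul_same S)
    have h0 := psd_trace_re_nonneg this
    rwa [hSH.eq, cyc] at h0
  -- (Q * σ).trace.re ≤ 1
  have hQσ1 : (Q * σ).trace.re ≤ 1 := by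
    have hQ'psd : ((1 : Matrix (Fin d) (Fin d) ℂ) - Q).PosSemidef := by
      have h2 : ((1 : Matrix (Fin d) (Fin d) ℂ) - Q) * (1 - Q) = 1 - Q := by
        simp [Matrix.mul_sub, Matrix.sub_mul, hQ2]
      have := Matrix.posSemidef_conjTranspose_mul_self ((1 : Matrix (Fin d) (Fin d) ℂ) - Q)
      rwa [((Matrix.isHermitian_one).sub hQ).eq, h2] at this
    have := (hQ'psd.conjTranspose_mul_mul_same S)
    have h0 := psd_trace_re_nonneg this
    rw [hSH.eq, cyc, Matrix.sub_mul, Matrix.trace_sub, Matrix.one_mul, htr] at h0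
    simp only [Complex.sub_re, Complex.one_re] at h0
    linarith
  have hQσ0 : 0 ≤ (Q * σ).trace.re := by linarith [Real.sqrt_nonneg ε]
  -- bound |tr(R Q σ)| ≤ √ε
  have hDbound : ‖(R * Q * σ).trace‖ ≤ Real.sqrt ε := by
    calc ‖(R * Q * σ).trace‖
        ≤ Real.sqrt ((R * σ).trace.re) * Real.sqrt ((Q * σ).trace.re) := hcs
      _ ≤ Real.sqrt ε * Real.sqrt 1 :=
          mul_le_mul (Real.sqrt_le_sqrt hRσ) (Real.sqrt_le_sqrt hQσ1)
            (Real.sqrt_nonneg _) (Real.sqrt_nonneg _)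
      _ = Real.sqrt ε := by simp
  -- conclude
  have habs : ‖(P * Q * σ).trace‖ ≥ (Q * σ).trace.re - Real.sqrt ε := by
    have h1 : ‖(Q * σ).trace‖ ≤
        ‖(P * Q * σ).trace‖ + ‖(R * Q * σ).trace‖ := by
      have : (Q * σ).trace = (P * Q * σ).trace + (R * Q * σ).trace := by
        rw [hdec]; ring
      rw [this]; exact norm_add_le _ _
    have h2 : (Q * σ).trace.re ≤ ‖(Q * σ).trace‖ := Complex.re_le_norm _
    linarith
  have hεs : ε ≤ Real.sqrt ε := by
    nlinarith [Real.sq_sqrt hε0, Real.sqrt_nonneg ε, Real.sqrt_le_one.mpr hε1]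
  linarith
end
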